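/- Let I_e, I₃ > 0 and s, ψ̇, θ, ω ∈ ℝ with ω ≠ 0. Define I = diag(I_e, I_e, I₃), J₀ = sω²·diag(1, 1, 0), R(t) = R₃(ψ̇t)·R₁(θ)·R₃(−ψ̇t·cos θ)·R₃(ωt), ω̂(t) = R′(t)·R(t)⁻¹ with angular velocity vector ω⃗(t) the unique vector whose hat map is ω̂(t), I_t(t) = R(t)·I·R(t)ᵀ and π(t) = I_t(t)·ω⃗(t). If (s·(I₃ − I_e)/I₃ − (I_e/I₃)·(ψ̇²/ω²))·cos θ + ψ̇/ω = 0, then for all t: hat(π′(t)) = I_t(t)·J₀ − J₀·I_t(t), i.e. R(t) is a solution of the rigid-body Euler equation with constant tidal-force matrix J₀. -/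

import Mathlib

open Matrix

noncomputable section

/-- The hat map, sending `x ∈ ℝ³` to the antisymmetric matrix `x̂` with `x̂ y = x × y`. -/
def hat (x : Fin 3 → ℝ) : Matrix (Fin 3) (Fin 3) ℝ :=
  !![0, -x 2, x 1; x 2, 0, -x 0; -x 1, x 0, 0]

/-- The check map, inverse of the hat map on antisymmetric matrices. -/
def check3 (A : Matrix (Fin 3) (Fin 3) ℝ) : Fin 3 → ℝ := ![A 2 1, A 0 2, A 1 0]

/-- Rotation matrix about the first coordinate axis. -/
def R1 (θ : ℝ) : Matrix (Fin 3) (Fin 3) ℝ :=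
  !![1, 0, 0; 0, Real.cos θ, -Real.sin θ; 0, Real.sin θ, Real.cos θ]

/-- Rotation matrix about the third coordinate axis. -/
def R3 (θ : ℝ) : Matrix (Fin 3) (Fin 3) ℝ :=
  !![Real.cos θ, -Real.sin θ, 0; Real.sin θ, Real.cos θ, 0; 0, 0, 1]

/-- The precessing guiding motion `R(t) = R₃(ψ̇t) R₁(θ) R₃(−ψ̇t cos θ) R₃(ωt)`. -/
def Rg (ψd θ ω t : ℝ) : Matrix (Fin 3) (Fin 3) ℝ :=
  R3 (ψd * t) * R1 θ * R3 (-(ψd * t * Real.cos θ)) * R3 (ω * t)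

/-- Entrywise derivative `R′(t)` of the guiding motion. -/
def Rgdot (ψd θ ω t : ℝ) : Matrix (Fin 3) (Fin 3) ℝ :=
  Matrix.of fun i j => deriv (fun s => Rg ψd θ ω s i j) t

/-- The angular velocity vector `ω⃗(t)`, the unique vector whose hat map is
`ω̂(t) = R′(t)R(t)⁻¹`. -/
def omegaVec (ψd θ ω t : ℝ) : Fin 3 → ℝ :=
  check3 (Rgdot ψd θ ω t * (Rg ψd θ ω t)⁻¹)

/-- The moment of inertia in the inertial frame, `I_t(t) = R(t)·diag(I_e,I_e,I₃)·R(t)ᵀ`. -/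
def It (Ie I3 ψd θ ω t : ℝ) : Matrix (Fin 3) (Fin 3) ℝ :=
  Rg ψd θ ω t * Matrix.diagonal ![Ie, Ie, I3] * (Rg ψd θ ω t)ᵀ

/-- The angular momentum `π(t) = I_t(t)·ω⃗(t)`. -/
def piVec (Ie I3 ψd θ ω t : ℝ) : Fin 3 → ℝ :=
  It Ie I3 ψd θ ω t *ᵥ omegaVec ψd θ ω t

/-- The time derivative `π′(t)` of the angular momentum, componentwise. -/
def piDot (Ie I3 ψd θ ω t : ℝ) : Fin 3 → ℝ :=
  fun i => deriv (fun s => piVec Ie I3 ψd θ ω s i) t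

-- AUXILIARY DEVELOPMENT (inserted before stmt_14)

lemma aux_hdc (a t : ℝ) : HasDerivAt (fun s => Real.cos (a * s)) (-(a * Real.sin (a * t))) t := by
  have h : HasDerivAt (fun s : ℝ => a * s) a t := by simpa using (hasDerivAt_id t).const_mul a
  have := h.cos; convert this using 1; ring

lemma aux_hds (a t : ℝ) : HasDerivAt (fun s => Real.sin (a * s)) (a * Real.cos (a * t)) t := by
  have h : HasDerivAt (fun s : ℝ => a * s) a t := by simpa using (hasDerivAt_id t).const_mul a
  have := h.sin; convert this using 1; ring

/-- Explicit form of the guiding motion. -/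
def RgE (a b θ t : ℝ) : Matrix (Fin 3) (Fin 3) ℝ :=
  !![Real.cos (a*t) * Real.cos (b*t) - Real.cos θ * (Real.sin (a*t) * Real.sin (b*t)),
     -(Real.cos (a*t) * Real.sin (b*t)) - Real.cos θ * (Real.sin (a*t) * Real.cos (b*t)),
     Real.sin θ * Real.sin (a*t);
     Real.sin (a*t) * Real.cos (b*t) + Real.cos θ * (Real.cos (a*t) * Real.sin (b*t)),
     -(Real.sin (a*t) * Real.sin (b*t)) + Real.cos θ * (Real.cos (a*t) * Real.cos (b*t)),
     -(Real.sin θ * Real.cos (a*t));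
     Real.sin θ * Real.sin (b*t), Real.sin θ * Real.cos (b*t), Real.cos θ]

/-- Explicit form of the entrywise derivative of the guiding motion. -/
def RgdotE (a b θ t : ℝ) : Matrix (Fin 3) (Fin 3) ℝ :=
  !![-(a * (Real.sin (a*t) * Real.cos (b*t))) - b * (Real.cos (a*t) * Real.sin (b*t))
       - Real.cos θ * (a * (Real.cos (a*t) * Real.sin (b*t)) + b * (Real.sin (a*t) * Real.cos (b*t))),
     a * (Real.sin (a*t) * Real.sin (b*t)) - b * (Real.cos (a*t) * Real.cos (b*t))
       + Real.cos θ * (b * (Real.sin (a*t) * Real.sin (b*t)) - a * (Real.cos (a*t) * Real.cos (b*t))),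
     Real.sin θ * (a * Real.cos (a*t));
     a * (Real.cos (a*t) * Real.cos (b*t)) - b * (Real.sin (a*t) * Real.sin (b*t))
       + Real.cos θ * (b * (Real.cos (a*t) * Real.cos (b*t)) - a * (Real.sin (a*t) * Real.sin (b*t))),
     -(b * (Real.sin (a*t) * Real.cos (b*t))) - a * (Real.cos (a*t) * Real.sin (b*t))
       - Real.cos θ * (a * (Real.sin (a*t) * Real.cos (b*t)) + b * (Real.cos (a*t) * Real.sin (b*t))),
     Real.sin θ * (a * Real.sin (a*t));
     Real.sin θ * (b * Real.cos (b*t)), -(Real.sin θ * (b * Real.sin (b*t))), 0]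

lemma Rg_eq (ψd θ ω t : ℝ) : Rg ψd θ ω t = RgE ψd (ω - ψd * Real.cos θ) θ t := by
  have hb : (ω - ψd * Real.cos θ) * t = ω * t - ψd * t * Real.cos θ := by ring
  ext i j
  fin_cases i <;> fin_cases j <;>
    simp [Rg, R1, R3, RgE, Matrix.mul_apply, Fin.sum_univ_three, hb, Real.cos_sub,
      Real.sin_sub, Real.cos_neg, Real.sin_neg] <;> ring

lemma RgE_deriv (a b θ t : ℝ) (i j : Fin 3) :
    deriv (fun s => RgE a b θ s i j) t = RgdotE a b θ t i j := by
  have e00 : deriv (fun s => RgE a b θ s 0 0) t = RgdotE a b θ t 0 0 := by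
    simp only [RgE, RgdotE, Matrix.of_apply, Matrix.cons_val', Matrix.cons_val_zero, Matrix.cons_val_one,
      Matrix.head_cons, Matrix.empty_val', Matrix.cons_val_fin_one, Matrix.head_fin_const,
      Matrix.cons_val_two, Matrix.tail_cons]
    exact (((aux_hdc a t).mul (aux_hdc b t)).sub
      (HasDerivAt.const_mul (Real.cos θ) ((aux_hds a t).mul (aux_hds b t)))).deriv.trans (by ring)
  have e01 : deriv (fun s => RgE a b θ s 0 1) t = RgdotE a b θ t 0 1 := by
    simp only [RgE, RgdotE, Matrix.of_apply, Matrix.cons_val', Matrix.cons_val_zero, Matrix.cons_val_one,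
      Matrix.head_cons, Matrix.empty_val', Matrix.cons_val_fin_one, Matrix.head_fin_const,
      Matrix.cons_val_two, Matrix.tail_cons]
    exact ((((aux_hdc a t).mul (aux_hds b t)).neg).sub
      (HasDerivAt.const_mul (Real.cos θ) ((aux_hds a t).mul (aux_hdc b t)))).deriv.trans (by ring)
  have e02 : deriv (fun s => RgE a b θ s 0 2) t = RgdotE a b θ t 0 2 := by
    simp only [RgE, RgdotE, Matrix.of_apply, Matrix.cons_val', Matrix.cons_val_zero, Matrix.cons_val_one,
      Matrix.head_cons, Matrix.empty_val', Matrix.cons_val_fin_one, Matrix.head_fin_const,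
      Matrix.cons_val_two, Matrix.tail_cons]
    exact (HasDerivAt.const_mul (Real.sin θ) (aux_hds a t)).deriv.trans (by ring)
  have e10 : deriv (fun s => RgE a b θ s 1 0) t = RgdotE a b θ t 1 0 := by
    simp only [RgE, RgdotE, Matrix.of_apply, Matrix.cons_val', Matrix.cons_val_zero, Matrix.cons_val_one,
      Matrix.head_cons, Matrix.empty_val', Matrix.cons_val_fin_one, Matrix.head_fin_const,
      Matrix.cons_val_two, Matrix.tail_cons]
    exact (((aux_hds a t).mul (aux_hdc b t)).add
      (HasDerivAt.const_mul (Real.cos θ) ((aux_hdc a t).mul (aux_hds b t)))).deriv.trans (by ring)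
  have e11 : deriv (fun s => RgE a b θ s 1 1) t = RgdotE a b θ t 1 1 := by
    simp only [RgE, RgdotE, Matrix.of_apply, Matrix.cons_val', Matrix.cons_val_zero, Matrix.cons_val_one,
      Matrix.head_cons, Matrix.empty_val', Matrix.cons_val_fin_one, Matrix.head_fin_const,
      Matrix.cons_val_two, Matrix.tail_cons]
    exact ((((aux_hds a t).mul (aux_hds b t)).neg).add
      (HasDerivAt.const_mul (Real.cos θ) ((aux_hdc a t).mul (aux_hdc b t)))).deriv.trans (by ring)
  have e12 : deriv (fun s => RgE a b θ s 1 2) t = RgdotE a b θ t 1 2 := by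
    simp only [RgE, RgdotE, Matrix.of_apply, Matrix.cons_val', Matrix.cons_val_zero, Matrix.cons_val_one,
      Matrix.head_cons, Matrix.empty_val', Matrix.cons_val_fin_one, Matrix.head_fin_const,
      Matrix.cons_val_two, Matrix.tail_cons]
    exact ((HasDerivAt.const_mul (Real.sin θ) (aux_hdc a t)).neg).deriv.trans (by ring)
  have e20 : deriv (fun s => RgE a b θ s 2 0) t = RgdotE a b θ t 2 0 := by
    simp only [RgE, RgdotE, Matrix.of_apply, Matrix.cons_val', Matrix.cons_val_zero, Matrix.cons_val_one,
      Matrix.head_cons, Matrix.empty_val', Matrix.cons_val_fin_one, Matrix.head_fin_const,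
      Matrix.cons_val_two, Matrix.tail_cons]
    exact (HasDerivAt.const_mul (Real.sin θ) (aux_hds b t)).deriv.trans (by ring)
  have e21 : deriv (fun s => RgE a b θ s 2 1) t = RgdotE a b θ t 2 1 := by
    simp only [RgE, RgdotE, Matrix.of_apply, Matrix.cons_val', Matrix.cons_val_zero, Matrix.cons_val_one,
      Matrix.head_cons, Matrix.empty_val', Matrix.cons_val_fin_one, Matrix.head_fin_const,
      Matrix.cons_val_two, Matrix.tail_cons]
    refine (HasDerivAt.const_mul (Real.sin θ) (aux_hdc b t)).deriv.trans ?_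
    ring
  have e22 : deriv (fun s => RgE a b θ s 2 2) t = RgdotE a b θ t 2 2 := by
    simp only [RgE, RgdotE, Matrix.of_apply, Matrix.cons_val', Matrix.cons_val_zero, Matrix.cons_val_one,
      Matrix.head_cons, Matrix.empty_val', Matrix.cons_val_fin_one, Matrix.head_fin_const,
      Matrix.cons_val_two, Matrix.tail_cons]
    exact (hasDerivAt_const t (Real.cos θ)).deriv.trans (by ring)
  fin_cases i <;> fin_cases j
  · exact e00
  · exact e01
  · exact e02
  · exact e10
  · exact e11
  · exact e12
  · exact e20
  · exact e21
  · exact e22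

lemma Rgdot_eq (ψd θ ω t : ℝ) : Rgdot ψd θ ω t = RgdotE ψd (ω - ψd * Real.cos θ) θ t := by
  have hfun : ∀ i j, (fun s => Rg ψd θ ω s i j)
      = (fun s => RgE ψd (ω - ψd * Real.cos θ) θ s i j) := by
    intro i j; funext u; rw [Rg_eq]
  ext i j
  simp only [Rgdot, Matrix.of_apply]
  rw [hfun i j, RgE_deriv]

lemma aux_orth_mul {M N : Matrix (Fin 3) (Fin 3) ℝ} (hM : M * Mᵀ = 1) (hN : N * Nᵀ = 1) :
    (M * N) * (M * N)ᵀ = 1 := by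
  rw [Matrix.transpose_mul, Matrix.mul_assoc, ← Matrix.mul_assoc N, hN, Matrix.one_mul, hM]

lemma R3_orth (x : ℝ) : R3 x * (R3 x)ᵀ = 1 := by
  have hT : (R3 x)ᵀ = !![Real.cos x, Real.sin x, 0; -Real.sin x, Real.cos x, 0; 0, 0, 1] := by
    ext i j
    fin_cases i <;> fin_cases j <;> simp [R3, Matrix.transpose_apply, Matrix.vecHead, Matrix.vecTail]
  rw [hT]
  ext i j
  fin_cases i <;> fin_cases j <;>
    simp [R3, Matrix.mul_apply, Fin.sum_univ_three, Matrix.one_apply, Matrix.vecHead, Matrix.vecTail] <;>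
    first
      | linear_combination Real.sin_sq_add_cos_sq x
      | ring

lemma R1_orth (x : ℝ) : R1 x * (R1 x)ᵀ = 1 := by
  have hT : (R1 x)ᵀ = !![1, 0, 0; 0, Real.cos x, Real.sin x; 0, -Real.sin x, Real.cos x] := by
    ext i j
    fin_cases i <;> fin_cases j <;> simp [R1, Matrix.transpose_apply, Matrix.vecHead, Matrix.vecTail]
  rw [hT]
  ext i j
  fin_cases i <;> fin_cases j <;>
    simp [R1, Matrix.mul_apply, Fin.sum_univ_three, Matrix.one_apply, Matrix.vecHead, Matrix.vecTail] <;>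
    first
      | linear_combination Real.sin_sq_add_cos_sq x
      | ring

lemma Rg_orth (ψd θ ω t : ℝ) : Rg ψd θ ω t * (Rg ψd θ ω t)ᵀ = 1 := by
  rw [Rg]
  exact aux_orth_mul (aux_orth_mul (aux_orth_mul (R3_orth _) (R1_orth _)) (R3_orth _)) (R3_orth _)

lemma Rg_inv (ψd θ ω t : ℝ) : (Rg ψd θ ω t)⁻¹ = (Rg ψd θ ω t)ᵀ :=
  Matrix.inv_eq_right_inv (Rg_orth ψd θ ω t)


/-- Explicit transpose of `RgE`. -/
lemma RgE_transpose (a b θ t : ℝ) : (RgE a b θ t)ᵀ =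
    !![Real.cos (a*t) * Real.cos (b*t) - Real.cos θ * (Real.sin (a*t) * Real.sin (b*t)),
       Real.sin (a*t) * Real.cos (b*t) + Real.cos θ * (Real.cos (a*t) * Real.sin (b*t)),
       Real.sin θ * Real.sin (b*t);
       -(Real.cos (a*t) * Real.sin (b*t)) - Real.cos θ * (Real.sin (a*t) * Real.cos (b*t)),
       -(Real.sin (a*t) * Real.sin (b*t)) + Real.cos θ * (Real.cos (a*t) * Real.cos (b*t)),
       Real.sin θ * Real.cos (b*t);
       Real.sin θ * Real.sin (a*t), -(Real.sin θ * Real.cos (a*t)), Real.cos θ] := by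
  ext i j
  fin_cases i <;> fin_cases j <;> simp [RgE, Matrix.transpose_apply]

lemma omegaVec_eq (ψd θ ω t : ℝ) :
    omegaVec ψd θ ω t =
      ![(ω - ψd * Real.cos θ) * (Real.sin θ * Real.sin (ψd*t)),
        -((ω - ψd * Real.cos θ) * (Real.sin θ * Real.cos (ψd*t))),
        ψd + (ω - ψd * Real.cos θ) * Real.cos θ] := by
  funext i
  simp only [omegaVec, check3]
  rw [Rg_inv, Rgdot_eq, Rg_eq, RgE_transpose]
  fin_cases i <;>
    simp [RgdotE, Matrix.mul_apply, Fin.sum_univ_three, Matrix.vecHead, Matrix.vecTail]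
  · linear_combination (Real.sin (ψd*t)*Real.sin θ*(ω - ψd*Real.cos θ)) * (Real.sin_sq_add_cos_sq ((ω - ψd*Real.cos θ)*t))
  · linear_combination ((-1)*Real.cos (ψd*t)*Real.sin θ*(ω - ψd*Real.cos θ) + (-1)*Real.cos (ψd*t)*Real.cos θ*Real.sin θ*ψd) * (Real.sin_sq_add_cos_sq ((ω - ψd*Real.cos θ)*t))
  · linear_combination (Real.sin θ^2*ψd + Real.sin ((ω - ψd*Real.cos θ)*t)^2*Real.cos θ*(ω - ψd*Real.cos θ) + Real.sin ((ω - ψd*Real.cos θ)*t)^2*Real.cos θ^2*ψd + Real.cos ((ω - ψd*Real.cos θ)*t)^2*Real.cos θ*(ω - ψd*Real.cos θ) + Real.cos ((ω - ψd*Real.cos θ)*t)^2*Real.cos θ^2*ψd) * (Real.sin_sq_add_cos_sq (ψd*t)) + (Real.cos θ*(ω - ψd*Real.cos θ) + Real.cos θ^2*ψd + Real.cos (ψd*t)^2*ψd + (-1)*Real.cos (ψd*t)^2*Real.cos θ^2*ψd) * (Real.sin_sq_add_cos_sq ((ω - ψd*Real.cos θ)*t)) + (ψd + (-1)*Real.cos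 (ψd*t)^2*ψd) * (Real.sin_sq_add_cos_sq θ)

lemma diag_lit (Ie I3 : ℝ) :
    (Matrix.diagonal ![Ie, Ie, I3] : Matrix (Fin 3) (Fin 3) ℝ)
      = !![Ie, 0, 0; 0, Ie, 0; 0, 0, I3] := by
  ext i j
  fin_cases i <;> fin_cases j <;> simp [Matrix.diagonal_apply, Matrix.vecHead, Matrix.vecTail]

lemma piVec_eq (Ie I3 ψd θ ω t : ℝ) :
    piVec Ie I3 ψd θ ω t =
      ![-(Real.sin (ψd*t) * (Real.cos θ * (Ie * (ψd * Real.sin θ)) - Real.sin θ * (I3 * ω))),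
        Real.cos (ψd*t) * (Real.cos θ * (Ie * (ψd * Real.sin θ)) - Real.sin θ * (I3 * ω)),
        Real.sin θ * (Ie * (ψd * Real.sin θ)) + Real.cos θ * (I3 * ω)] := by
  funext i
  simp only [piVec, It]
  rw [Rg_eq, RgE_transpose, diag_lit, omegaVec_eq]
  fin_cases i <;>
    simp [RgE, Matrix.mul_apply, Matrix.mulVec, dotProduct, Fin.sum_univ_three,
      Matrix.vecHead, Matrix.vecTail]
  · linear_combination (Real.sin (ψd*t)*Real.sin θ^3*I3*ω + (-1)*Real.sin (ψd*t)*Real.cos θ*Real.sin θ^3*ψd*I3 + Real.sin (ψd*t)*Real.sin ((ω - ψd*Real.cos θ)*t)^2*Real.cos θ^2*Real.sin θ*Ie*ω + (-1)*Real.sin (ψd*t)*Real.sin ((ω - ψd*Real.cos θ)*t)^2*Real.cos θ^3*Real.sin θ*ψd*Ie + Real.sin (ψd*t)*Real.cos ((ω - ψd*Real.cos θ)*t)^2*Real.cos θ^2*Real.sin θ*Ie*ω + (-1)*Real.sin (ψd*t)*Real.cos ((ω - ψd*Real.cos θ)*t)^2*Real.cos θ^3*Real.sin θ*ψd*Ie)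 * (Real.sin_sq_add_cos_sq (ψd*t)) + ((-1)*Real.sin (ψd*t)*Real.cos θ*Real.sin θ*ψd*Ie) * (Real.sin_sq_add_cos_sq ((ω - ψd*Real.cos θ)*t)) + (Real.sin (ψd*t)*Real.sin θ*I3*ω + (-1)*Real.sin (ψd*t)*Real.cos θ*Real.sin θ*ψd*I3) * (Real.sin_sq_add_cos_sq θ)
  · linear_combination ((-1)*Real.cos (ψd*t)*Real.sin θ^3*I3*ω + Real.cos (ψd*t)*Real.cos θ*Real.sin θ^3*ψd*I3 + (-1)*Real.cos (ψd*t)*Real.sin ((ω - ψd*Real.cos θ)*t)^2*Real.cos θ^2*Real.sin θ*Ie*ω + Real.cos (ψd*t)*Real.sin ((ω - ψd*Real.cos θ)*t)^2*Real.cos θ^3*Real.sin θ*ψd*Ie + (-1)*Real.cos (ψd*t)*Real.cos ((ω - ψd*Real.cos θ)*t)^2*Real.cos θ^2*Real.sin θ*Ie*ω + Real.cos (ψd*t)*Real.cos ((ω - ψd*Real.cos θ)*t)^2*Real.cos θ^3*Real.sin θ*ψd*Ie) * (Real.sin_sq_add_cos_sq (ψd*t)) + (Real.cos (ψd*t)*Real.cos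 θ*Real.sin θ*ψd*Ie) * (Real.sin_sq_add_cos_sq ((ω - ψd*Real.cos θ)*t)) + ((-1)*Real.cos (ψd*t)*Real.sin θ*I3*ω + Real.cos (ψd*t)*Real.cos θ*Real.sin θ*ψd*I3) * (Real.sin_sq_add_cos_sq θ)
  · linear_combination (Real.cos θ*Real.sin θ^2*I3*ω + (-1)*Real.cos θ^2*Real.sin θ^2*ψd*I3 + (-1)*Real.sin ((ω - ψd*Real.cos θ)*t)^2*Real.cos θ*Real.sin θ^2*Ie*ω + Real.sin ((ω - ψd*Real.cos θ)*t)^2*Real.cos θ^2*Real.sin θ^2*ψd*Ie + (-1)*Real.cos ((ω - ψd*Real.cos θ)*t)^2*Real.cos θ*Real.sin θ^2*Ie*ω + Real.cos ((ω - ψd*Real.cos θ)*t)^2*Real.cos θ^2*Real.sin θ^2*ψd*Ie) * (Real.sin_sq_add_cos_sq (ψd*t)) + (Real.sin θ^2*ψd*Ie) * (Real.sin_sq_add_cos_sq ((ω - ψd*Real.cos θ)*t)) + (Real.cos θ*I3*ω + (-1)*Real.cos θ^2*ψd*I3) * (Real.sin_sq_add_cos_sq θ)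

lemma piDot_eq (Ie I3 ψd θ ω t : ℝ) :
    piDot Ie I3 ψd θ ω t =
      ![-(ψd * (Real.cos (ψd*t) * (Real.cos θ * (Ie * (ψd * Real.sin θ)) - Real.sin θ * (I3 * ω)))),
        -(ψd * (Real.sin (ψd*t) * (Real.cos θ * (Ie * (ψd * Real.sin θ)) - Real.sin θ * (I3 * ω)))),
        0] := by
  have hfun : ∀ i, (fun s => piVec Ie I3 ψd θ ω s i)
      = (fun s => (![-(Real.sin (ψd*s) * (Real.cos θ * (Ie * (ψd * Real.sin θ)) - Real.sin θ * (I3 * ω))),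
          Real.cos (ψd*s) * (Real.cos θ * (Ie * (ψd * Real.sin θ)) - Real.sin θ * (I3 * ω)),
          Real.sin θ * (Ie * (ψd * Real.sin θ)) + Real.cos θ * (I3 * ω)] : Fin 3 → ℝ) i) := by
    intro i; funext u; rw [piVec_eq]
  funext i
  simp only [piDot]
  rw [hfun i]
  have e0 : deriv (fun s => (![-(Real.sin (ψd*s) * (Real.cos θ * (Ie * (ψd * Real.sin θ)) - Real.sin θ * (I3 * ω))),
          Real.cos (ψd*s) * (Real.cos θ * (Ie * (ψd * Real.sin θ)) - Real.sin θ * (I3 * ω)),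
          Real.sin θ * (Ie * (ψd * Real.sin θ)) + Real.cos θ * (I3 * ω)] : Fin 3 → ℝ) 0) t
      = -(ψd * (Real.cos (ψd*t) * (Real.cos θ * (Ie * (ψd * Real.sin θ)) - Real.sin θ * (I3 * ω)))) := by
    simp only [Matrix.cons_val_zero]
    exact (((aux_hds ψd t).mul_const _).neg).deriv.trans (by ring)
  have e1 : deriv (fun s => (![-(Real.sin (ψd*s) * (Real.cos θ * (Ie * (ψd * Real.sin θ)) - Real.sin θ * (I3 * ω))),
          Real.cos (ψd*s) * (Real.cos θ * (Ie * (ψd * Real.sin θ)) - Real.sin θ * (I3 * ω)),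
          Real.sin θ * (Ie * (ψd * Real.sin θ)) + Real.cos θ * (I3 * ω)] : Fin 3 → ℝ) 1) t
      = -(ψd * (Real.sin (ψd*t) * (Real.cos θ * (Ie * (ψd * Real.sin θ)) - Real.sin θ * (I3 * ω)))) := by
    simp only [Matrix.cons_val_one, Matrix.head_cons]
    exact ((aux_hdc ψd t).mul_const _).deriv.trans (by ring)
  have e2 : deriv (fun s => (![-(Real.sin (ψd*s) * (Real.cos θ * (Ie * (ψd * Real.sin θ)) - Real.sin θ * (I3 * ω))),
          Real.cos (ψd*s) * (Real.cos θ * (Ie * (ψd * Real.sin θ)) - Real.sin θ * (I3 * ω)),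
          Real.sin θ * (Ie * (ψd * Real.sin θ)) + Real.cos θ * (I3 * ω)] : Fin 3 → ℝ) 2) t
      = 0 := by
    simp only [Matrix.cons_val_two, Matrix.tail_cons, Matrix.head_cons]
    exact deriv_const t _
  fin_cases i
  · exact e0.trans (by simp)
  · exact e1.trans (by simp)
  · exact e2.trans (by simp)


set_option maxHeartbeats 1000000 in
lemma It_lit (Ie I3 ψd θ ω t : ℝ) : It Ie I3 ψd θ ω t =
    !![(Real.sin (ψd*t)^2*Real.sin θ^2*I3 + Real.sin (ψd*t)^2*Real.sin ((ω - ψd*Real.cos θ)*t)^2*Real.cos θ^2*Ie + Real.sin (ψd*t)^2*Real.cos ((ω - ψd*Real.cos θ)*t)^2*Real.cos θ^2*Ie + Real.cos (ψd*t)^2*Real.sin ((ω - ψd*Real.cos θ)*t)^2*Ie + Real.cos (ψd*t)^2*Real.cos ((ω - ψd*Real.cos θ)*t)^2*Ie),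
       ((-1)*Real.cos (ψd*t)*Real.sin (ψd*t)*Real.sin θ^2*I3 + Real.cos (ψd*t)*Real.sin (ψd*t)*Real.sin ((ω - ψd*Real.cos θ)*t)^2*Ie + (-1)*Real.cos (ψd*t)*Real.sin (ψd*t)*Real.sin ((ω - ψd*Real.cos θ)*t)^2*Real.cos θ^2*Ie + Real.cos (ψd*t)*Real.sin (ψd*t)*Real.cos ((ω - ψd*Real.cos θ)*t)^2*Ie + (-1)*Real.cos (ψd*t)*Real.sin (ψd*t)*Real.cos ((ω - ψd*Real.cos θ)*t)^2*Real.cos θ^2*Ie),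
       (Real.sin (ψd*t)*Real.cos θ*Real.sin θ*I3 + (-1)*Real.sin (ψd*t)*Real.sin ((ω - ψd*Real.cos θ)*t)^2*Real.cos θ*Real.sin θ*Ie + (-1)*Real.sin (ψd*t)*Real.cos ((ω - ψd*Real.cos θ)*t)^2*Real.cos θ*Real.sin θ*Ie);
       ((-1)*Real.cos (ψd*t)*Real.sin (ψd*t)*Real.sin θ^2*I3 + Real.cos (ψd*t)*Real.sin (ψd*t)*Real.sin ((ω - ψd*Real.cos θ)*t)^2*Ie + (-1)*Real.cos (ψd*t)*Real.sin (ψd*t)*Real.sin ((ω - ψd*Real.cos θ)*t)^2*Real.cos θ^2*Ie + Real.cos (ψd*t)*Real.sin (ψd*t)*Real.cos ((ω - ψd*Real.cos θ)*t)^2*Ie + (-1)*Real.cos (ψd*t)*Real.sin (ψd*t)*Real.cos ((ω - ψd*Real.cos θ)*t)^2*Real.cos θ^2*Ie),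
       (Real.sin (ψd*t)^2*Real.sin ((ω - ψd*Real.cos θ)*t)^2*Ie + Real.sin (ψd*t)^2*Real.cos ((ω - ψd*Real.cos θ)*t)^2*Ie + Real.cos (ψd*t)^2*Real.sin θ^2*I3 + Real.cos (ψd*t)^2*Real.sin ((ω - ψd*Real.cos θ)*t)^2*Real.cos θ^2*Ie + Real.cos (ψd*t)^2*Real.cos ((ω - ψd*Real.cos θ)*t)^2*Real.cos θ^2*Ie),
       ((-1)*Real.cos (ψd*t)*Real.cos θ*Real.sin θ*I3 + Real.cos (ψd*t)*Real.sin ((ω - ψd*Real.cos θ)*t)^2*Real.cos θ*Real.sin θ*Ie + Real.cos (ψd*t)*Real.cos ((ω - ψd*Real.cos θ)*t)^2*Real.cos θ*Real.sin θ*Ie);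
       (Real.sin (ψd*t)*Real.cos θ*Real.sin θ*I3 + (-1)*Real.sin (ψd*t)*Real.sin ((ω - ψd*Real.cos θ)*t)^2*Real.cos θ*Real.sin θ*Ie + (-1)*Real.sin (ψd*t)*Real.cos ((ω - ψd*Real.cos θ)*t)^2*Real.cos θ*Real.sin θ*Ie),
       ((-1)*Real.cos (ψd*t)*Real.cos θ*Real.sin θ*I3 + Real.cos (ψd*t)*Real.sin ((ω - ψd*Real.cos θ)*t)^2*Real.cos θ*Real.sin θ*Ie + Real.cos (ψd*t)*Real.cos ((ω - ψd*Real.cos θ)*t)^2*Real.cos θ*Real.sin θ*Ie),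
       (Real.cos θ^2*I3 + Real.sin ((ω - ψd*Real.cos θ)*t)^2*Real.sin θ^2*Ie + Real.cos ((ω - ψd*Real.cos θ)*t)^2*Real.sin θ^2*Ie)] := by
  rw [It, Rg_eq, RgE_transpose, diag_lit]
  ext i j
  fin_cases i <;> fin_cases j <;>
    simp [RgE, Matrix.mul_apply, Fin.sum_univ_three, Matrix.vecHead, Matrix.vecTail] <;>
    ring


/-- If the precession condition
`(s(I₃−I_e)/I₃ − (I_e/I₃)(ψ̇²/ω²))cos θ + ψ̇/ω = 0` holds, then the precessing guiding
motion solves the rigid-body Euler equation `π̂′ = [I_t, J₀]` with the constant tidal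
force matrix `J₀ = sω² diag(1,1,0)`. -/
theorem stmt_14 (Ie I3 s ψd θ ω : ℝ) (hIe : 0 < Ie) (hI3 : 0 < I3) (hω : ω ≠ 0)
    (hcond : (s * (I3 - Ie) / I3 - (Ie / I3) * (ψd ^ 2 / ω ^ 2)) * Real.cos θ
      + ψd / ω = 0) :
    ∀ t : ℝ,
      hat (piDot Ie I3 ψd θ ω t) =
        It Ie I3 ψd θ ω t * ((s * ω ^ 2) • Matrix.diagonal ![1, 1, 0])
          - ((s * ω ^ 2) • Matrix.diagonal ![1, 1, 0]) * It Ie I3 ψd θ ω t := by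
  have hI3' : I3 ≠ 0 := ne_of_gt hI3
  have h3ω : I3 * ω ≠ 0 := mul_ne_zero hI3' hω
  have hC : s * (I3 - Ie) * ω^2 * Real.cos θ - Ie * ψd^2 * Real.cos θ + I3 * ψd * ω = 0 := by
    field_simp at hcond
    have h0 : (I3 * ω) * (s * (I3 - Ie) * ω^2 * Real.cos θ - Ie * ψd^2 * Real.cos θ + I3 * ψd * ω)
        = 0 := by linear_combination (I3 * ω) * hcond
    exact (mul_eq_zero.mp h0).resolve_left h3ω
  have hkey : ψd * (Ie * ψd * Real.cos θ - I3 * ω) = s * ω^2 * ((I3 - Ie) * Real.cos θ) := by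
    linear_combination Real.cos θ * hC - hC * Real.cos θ + (-1 : ℝ) * hC
  intro t
  have hsm : ((s * ω ^ 2) • Matrix.diagonal ![1, 1, 0] : Matrix (Fin 3) (Fin 3) ℝ)
      = !![s * ω^2, 0, 0; 0, s * ω^2, 0; 0, 0, 0] := by
    ext i j
    fin_cases i <;> fin_cases j <;>
      simp [Matrix.diagonal_apply, Matrix.vecHead, Matrix.vecTail]
  rw [piDot_eq, It_lit, hsm]
  ext i j
  fin_cases i <;> fin_cases j <;>
    simp [hat, Matrix.mul_apply, Matrix.sub_apply, Fin.sum_univ_three,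
      Matrix.vecHead, Matrix.vecTail]
  all_goals (first
    | ring1
    | (linear_combination (Real.cos (ψd*t)*Real.cos θ*Real.sin θ*Ie*s*ω^2) * (Real.sin_sq_add_cos_sq ((ω - ψd*Real.cos θ)*t)) + (Real.cos (ψd*t)*Real.sin θ) * hkey)
    | (linear_combination ((-1)*Real.cos (ψd*t)*Real.cos θ*Real.sin θ*Ie*s*ω^2) * (Real.sin_sq_add_cos_sq ((ω - ψd*Real.cos θ)*t)) + ((-1)*Real.cos (ψd*t)*Real.sin θ) * hkey)
    | (linear_combination (Real.sin (ψd*t)*Real.cos θ*Real.sin θ*Ie*s*ω^2) * (Real.sin_sq_add_cos_sq ((ω - ψd*Real.cos θ)*t)) + (Real.sin (ψd*t)*Real.sin θ) * hkey)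
    | (linear_combination ((-1)*Real.sin (ψd*t)*Real.cos θ*Real.sin θ*Ie*s*ω^2) * (Real.sin_sq_add_cos_sq ((ω - ψd*Real.cos θ)*t)) + ((-1)*Real.sin (ψd*t)*Real.sin θ) * hkey))


end
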